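/- Let N ≥ 1, L ≥ 1, w ∈ ℂ^N, c ∈ ℂ^L, and let W = w c^H ∈ ℂ^{N×L} be a rank-at-most-one beamformer matrix. Let u ∈ ℝ and suppose v = W^H φ_N(u) ≠ 0. Then the conditional-CRB denominator for joint estimation of (α, u) vanishes: (∂φ_N(u)/∂u)^H W ( I − v v^H / (v^H v) ) W^H (∂φ_N(u)/∂u) = 0. In particular, if the same beamformer is used for all L snapshots (W rank one), the conditional Cramér–Rao bound for estimating u with unknown fading coefficient α is infinite. -/

import Mathlib

open Matrix

/-- Steering vector of a ULA: `(φ_N(u))_n = exp(iπnu)`. -/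
noncomputable def steer (N : ℕ) (u : ℝ) : Fin N → ℂ :=
  fun n => Complex.exp (Complex.I * (Real.pi * u * n))

/-- Entrywise derivative of the steering vector: `(∂φ_N(u)/∂u)_n = iπn·exp(iπnu)`. -/
noncomputable def dsteer (N : ℕ) (u : ℝ) : Fin N → ℂ :=
  fun n => Complex.I * (Real.pi * n) * Complex.exp (Complex.I * (Real.pi * u * n))

/-- if `W = w cᴴ` is a rank-(at most)-one beamformer matrix and
`v = Wᴴ φ_N(u) ≠ 0`, then the conditional-CRB denominator for joint estimation
of `(α, u)` vanishes:
`(∂φ_N/∂u)ᴴ W (I − v vᴴ/(vᴴv)) Wᴴ (∂φ_N/∂u) = 0`, i.e. the conditional CRB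
for `u` with unknown fading coefficient is infinite. -/
lemma vecMulVec_mulVec' {L : ℕ} (v w y : Fin L → ℂ) :
    vecMulVec v w *ᵥ y = (w ⬝ᵥ y) • v := by
  funext l
  simp [mulVec, vecMulVec, dotProduct, Finset.mul_sum, smul_eq_mul,
    Finset.sum_mul]
  exact Finset.sum_congr rfl fun x _ => by ring

theorem stmt13
    (N L : ℕ) (hN : 1 ≤ N) (hL : 1 ≤ L)
    (w : Fin N → ℂ) (c : Fin L → ℂ) (u : ℝ)
    (W : Matrix (Fin N) (Fin L) ℂ) (hWdef : W = vecMulVec w (star c))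
    (v : Fin L → ℂ) (hv : v = Wᴴ *ᵥ steer N u) (hvne : v ≠ 0) :
    star (dsteer N u) ⬝ᵥ
      (W *ᵥ (((1 : Matrix (Fin L) (Fin L) ℂ)
          - (star v ⬝ᵥ v)⁻¹ • vecMulVec v (star v)) *ᵥ (Wᴴ *ᵥ dsteer N u))) = 0 := by
  set φ := steer N u
  set d := dsteer N u
  have hWH : ∀ x : Fin N → ℂ, Wᴴ *ᵥ x = fun l => c l * (star w ⬝ᵥ x) := by
    intro x
    funext l
    simp [hWdef, mulVec, vecMulVec, dotProduct, Finset.mul_sum]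
    congr 1; funext n; ring
  set a := star w ⬝ᵥ φ with ha
  set b := star w ⬝ᵥ d with hb
  set s := star c ⬝ᵥ c with hs
  have hvl : v = fun l => c l * a := by rw [hv, hWH]
  obtain ⟨l₀, hl₀⟩ : ∃ l, v l ≠ 0 := by
    by_contra h
    push_neg at h
    exact hvne (funext h)
  have hca : c l₀ * a ≠ 0 := by rwa [hvl] at hl₀
  have hane : a ≠ 0 := fun h => hca (by simp [h])
  have hcne : c l₀ ≠ 0 := fun h => hca (by simp [h])
  have hsne : s ≠ 0 := by
    intro h
    have hre : (s).re = ∑ l, ‖c l‖ ^ 2 := by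
      simp [hs, dotProduct, Complex.normSq_eq_norm_sq, ← Complex.normSq_eq_norm_sq,
        Complex.mul_conj', Complex.normSq_apply, Complex.re_sum]
    rw [h] at hre
    have hle := Finset.single_le_sum (f := fun l => ‖c l‖ ^ 2)
      (fun i _ => by positivity) (Finset.mem_univ l₀)
    have hpos : 0 < ‖c l₀‖ ^ 2 := by
      have := norm_pos_iff.mpr hcne
      positivity
    simp only [Complex.zero_re] at hre
    nlinarith
  have key : (((1 : Matrix (Fin L) (Fin L) ℂ)
          - (star v ⬝ᵥ v)⁻¹ • vecMulVec v (star v)) *ᵥ (Wᴴ *ᵥ d)) = 0 := by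
    rw [hWH]
    have hy : (fun l => c l * b) = b • c := by
      funext l; simp [smul_eq_mul, mul_comm]
    rw [hy, sub_mulVec, one_mulVec, smul_mulVec, vecMulVec_mulVec']
    have hdv : star v ⬝ᵥ (b • c) = (starRingEnd ℂ) a * b * s := by
      simp [hvl, dotProduct, hs, Finset.mul_sum]
      congr 1; funext x; ring
    have hvv : star v ⬝ᵥ v = (starRingEnd ℂ) a * a * s := by
      simp [hvl, dotProduct, hs, Finset.mul_sum]
      congr 1; funext x; ring
    rw [hdv, hvv]
    funext l
    have hastar : (starRingEnd ℂ) a ≠ 0 := star_ne_zero.mpr hane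
    simp [hvl, smul_eq_mul]
    field_simp
    ring
  rw [key]
  simp
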